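/- Let Φ₀ be a strictly plurisubharmonic real quadratic form on ℂⁿ with Hermitian part Φ₀ʰᵉʳᵐ, let f be the holomorphic quadratic form with Φ₀ = Φ₀ʰᵉʳᵐ + Re f, and let 𝒰 : H_{Φ₀}(ℂⁿ) → H_{Φ₀ʰᵉʳᵐ}(ℂⁿ), 𝒰u = e^{−f}u, be the associated unitary map. Let q be a complex-valued inhomogeneous quadratic polynomial on ℂⁿ. Then Π_{Φ₀ʰᵉʳᵐ} ∘ e^q ∘ Π_{Φ₀ʰᵉʳᵐ} = 𝒰 ∘ (Π_{Φ₀} ∘ e^q ∘ Π_{Φ₀}) ∘ 𝒰⁻¹ (as densely defined operators, with 𝒰 mapping the maximal domain of Top(e^q) on H_{Φ₀}(ℂⁿ) bijectively onto that of Π_{Φ₀ʰᵉʳᵐ} ∘ e^q ∘ Π_{Φ₀ʰᵉʳᵐ} on H_{Φ₀ʰᵉʳᵐ}(ℂⁿ)). Consequently, Top(e^q) is bounded on H_{Φ₀}(ℂⁿ) if and only if Π_{Φ₀ʰᵉʳᵐ} ∘ e^q ∘ Π_{Φ₀ʰᵉʳᵐ} is bounded on H_{Φ₀ʰᵉʳᵐ}(ℂⁿ).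 -/

import Mathlib

open MeasureTheory Complex
open scoped ComplexOrder

noncomputable section

namespace BergerCoburn

variable {n : ℕ}

/-- Membership in the weighted space `L²(ℂⁿ, e^{-2Φ} L(dx))`. -/
def MemL2 (Φ : (Fin n → ℂ) → ℝ) (u : (Fin n → ℂ) → ℂ) : Prop :=
  Integrable (fun x => ‖u x‖ ^ 2 * Real.exp (-2 * Φ x))

/-- The squared weighted `L²` norm. -/
def wNormSq (Φ : (Fin n → ℂ) → ℝ) (u : (Fin n → ℂ) → ℂ) : ℝ :=
  ∫ x, ‖u x‖ ^ 2 * Real.exp (-2 * Φ x)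

/-- The weighted `L²` inner product. -/
def wInner (Φ : (Fin n → ℂ) → ℝ) (u v : (Fin n → ℂ) → ℂ) : ℂ :=
  ∫ x, u x * (starRingEnd ℂ) (v x) * (Real.exp (-2 * Φ x) : ℂ)

/-- Membership in the Bargmann space `H_Φ(ℂⁿ)`. -/
def MemH (Φ : (Fin n → ℂ) → ℝ) (u : (Fin n → ℂ) → ℂ) : Prop :=
  Differentiable ℂ u ∧ MemL2 Φ u

/-- `P` is the orthogonal projection of `L²(ℂⁿ, e^{-2Φ}L(dx))` onto `H_Φ(ℂⁿ)`. -/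
def IsBargmannProj (Φ : (Fin n → ℂ) → ℝ)
    (P : ((Fin n → ℂ) → ℂ) → ((Fin n → ℂ) → ℂ)) : Prop :=
  ∀ u, MemL2 Φ u →
    MemH Φ (P u) ∧ ∀ v, MemH Φ v → wInner Φ (fun x => u x - P u x) v = 0

/-- Membership in the maximal domain of `Top(e^q) = Π_Φ ∘ e^q ∘ Π_Φ`. -/
def MemDom (Φ : (Fin n → ℂ) → ℝ) (q : (Fin n → ℂ) → ℂ) (u : (Fin n → ℂ) → ℂ) : Prop :=
  MemH Φ u ∧ MemL2 Φ (fun x => Complex.exp (q x) * u x)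

/-- Boundedness of the Toeplitz operator `Top(e^q)` on its maximal domain. -/
def ToeplitzBounded (Φ : (Fin n → ℂ) → ℝ) (q : (Fin n → ℂ) → ℂ)
    (P : ((Fin n → ℂ) → ℂ) → ((Fin n → ℂ) → ℂ)) : Prop :=
  ∃ C : ℝ, 0 ≤ C ∧ ∀ u, MemDom Φ q u →
    Real.sqrt (wNormSq Φ (P fun x => Complex.exp (q x) * u x)) ≤
      C * Real.sqrt (wNormSq Φ u)

/-- The Hermitian part `Φʰᵉʳᵐ(x) = (Φ(x) + Φ(ix))/2`. -/
def herm (Φ : (Fin n → ℂ) → ℝ) (x : Fin n → ℂ) : ℝ :=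
  (Φ x + Φ (Complex.I • x)) / 2


private lemma diffBilin {𝕜 : Type*} [RCLike 𝕜] {E F : Type*}
    [NormedAddCommGroup E] [NormedSpace 𝕜 E] [FiniteDimensional 𝕜 E]
    [NormedAddCommGroup F] [NormedSpace 𝕜 F]
    (B : E →ₗ[𝕜] E →ₗ[𝕜] F) : Differentiable 𝕜 fun x => B x x := by
  let B₁ : E →ₗ[𝕜] (E →L[𝕜] F) :=
    { toFun := fun x => LinearMap.toContinuousLinearMap (B x),
      map_add' := by intro a b; ext y; simp,
      map_smul' := by intro a b; ext y; simp }
  let Bc : E →L[𝕜] (E →L[𝕜] F) := LinearMap.toContinuousLinearMap B₁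
  have h : IsBoundedBilinearMap 𝕜 fun p : E × E => Bc p.1 p.2 :=
    Bc.isBoundedBilinearMap
  have h2 : Differentiable 𝕜 fun x : E => Bc x x :=
    h.differentiable.comp (differentiable_id.prodMk differentiable_id)
  have : (fun x : E => Bc x x) = fun x => B x x := by
    funext x; simp [Bc, B₁]
  rwa [this] at h2

private lemma quadDiff {𝕜 : Type*} [RCLike 𝕜] {E F : Type*}
    [NormedAddCommGroup E] [NormedSpace 𝕜 E] [FiniteDimensional 𝕜 E]
    [NormedAddCommGroup F] [NormedSpace 𝕜 F]
    (Q : QuadraticMap 𝕜 E F) : Differentiable 𝕜 fun x => Q x := by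
  have key : ∀ x, Q x = (2:𝕜)⁻¹ • (QuadraticMap.polarBilin Q) x x := by
    intro x
    have h1 : QuadraticMap.polar Q x x = Q ((2:𝕜) • x) - Q x - Q x := by
      rw [QuadraticMap.polar, two_smul]
    rw [QuadraticMap.map_smul] at h1
    have : QuadraticMap.polar Q x x = (2:𝕜) • Q x := by
      rw [h1, show (2:𝕜)*2 = 2+1+1 by ring, add_smul, add_smul, one_smul]
      abel
    simp only [QuadraticMap.polarBilin_apply_apply, this, smul_smul]
    norm_num
  have : (fun x => Q x) = fun x => (2:𝕜)⁻¹ • (QuadraticMap.polarBilin Q) x x := by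
    funext x; exact key x
  rw [this]
  exact (diffBilin _).const_smul _

lemma wiInt (Φ : (Fin n → ℂ) → ℝ) (a b : (Fin n → ℂ) → ℂ)
    (hca : Continuous a) (hcb : Continuous b) (hcΦ : Continuous Φ)
    (ha : MemL2 Φ a) (hb : MemL2 Φ b) :
    Integrable (fun x => a x * (starRingEnd ℂ) (b x) * ((Real.exp (-2 * Φ x) : ℝ) : ℂ)) := by
  have hmeas : Continuous (fun x => a x * (starRingEnd ℂ) (b x) * ((Real.exp (-2 * Φ x) : ℝ) : ℂ)) := by
    simp only [starRingEnd_apply]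
    exact (hca.mul hcb.star).mul
      (Complex.continuous_ofReal.comp (Real.continuous_exp.comp (continuous_const.mul hcΦ)))
  apply Integrable.mono' ((ha.add hb).div_const 2) hmeas.aestronglyMeasurable
  filter_upwards with x
  have he : (0:ℝ) < Real.exp (-2 * Φ x) := Real.exp_pos _
  have h1 : ‖a x * (starRingEnd ℂ) (b x) * ((Real.exp (-2 * Φ x) : ℝ) : ℂ)‖
      = ‖a x‖ * ‖b x‖ * Real.exp (-2 * Φ x) := by
    rw [norm_mul, norm_mul, starRingEnd_apply, norm_star, Complex.norm_real,
      Real.norm_eq_abs, _root_.abs_of_pos he]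
  rw [h1]
  have : ‖a x‖ * ‖b x‖ ≤ (‖a x‖^2 + ‖b x‖^2)/2 := by nlinarith [sq_nonneg (‖a x‖ - ‖b x‖)]
  calc ‖a x‖ * ‖b x‖ * Real.exp (-2 * Φ x)
      ≤ (‖a x‖^2 + ‖b x‖^2)/2 * Real.exp (-2 * Φ x) := by nlinarith
    _ = (‖a x‖^2 * Real.exp (-2*Φ x) + ‖b x‖^2 * Real.exp (-2*Φ x))/2 := by ring

lemma memL2_sub (Φ : (Fin n → ℂ) → ℝ) (a b : (Fin n → ℂ) → ℂ)
    (hca : Continuous a) (hcb : Continuous b) (hcΦ : Continuous Φ)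
    (ha : MemL2 Φ a) (hb : MemL2 Φ b) : MemL2 Φ (fun x => a x - b x) := by
  unfold MemL2 at *
  apply Integrable.mono' ((ha.const_mul 2).add (hb.const_mul 2))
  · exact (((hca.sub hcb).norm.pow 2).mul
      (Real.continuous_exp.comp (continuous_const.mul hcΦ))).aestronglyMeasurable
  filter_upwards with x
  have he : (0:ℝ) < Real.exp (-2 * Φ x) := Real.exp_pos _
  have h2 : ‖a x - b x‖ ≤ ‖a x‖ + ‖b x‖ := norm_sub_le _ _
  rw [Real.norm_eq_abs, _root_.abs_of_nonneg (mul_nonneg (sq_nonneg _) he.le)]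
  simp only [Pi.add_apply]
  have h3 : ‖a x - b x‖^2 ≤ 2*‖a x‖^2 + 2*‖b x‖^2 := by
    nlinarith [norm_nonneg (a x - b x), norm_nonneg (a x), norm_nonneg (b x),
      sq_nonneg (‖a x‖ - ‖b x‖)]
  nlinarith [mul_le_mul_of_nonneg_right h3 he.le]

lemma proj_unique (Φ : (Fin n → ℂ) → ℝ) (hΦc : Continuous Φ)
    (P : ((Fin n → ℂ) → ℂ) → ((Fin n → ℂ) → ℂ)) (hP : IsBargmannProj Φ P)
    (w v : (Fin n → ℂ) → ℂ) (hw : MemL2 Φ w) (hwc : Continuous w)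
    (hv : MemH Φ v)
    (horth : ∀ h, MemH Φ h → wInner Φ (fun x => w x - v x) h = 0) :
    ∀ x, P w x = v x := by
  obtain ⟨hPH, hPorth⟩ := hP w hw
  have hPc : Continuous (P w) := hPH.1.continuous
  have hvc : Continuous v := hv.1.continuous
  have hdH : MemH Φ (fun x => P w x - v x) :=
    ⟨hPH.1.sub hv.1, memL2_sub Φ _ _ hPc hvc hΦc hPH.2 hv.2⟩
  have h1 := horth _ hdH
  have h2 := hPorth _ hdH
  have hiA : Integrable (fun x => (w x - v x) * (starRingEnd ℂ) (P w x - v x)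
      * ((Real.exp (-2 * Φ x) : ℝ) : ℂ)) :=
    wiInt Φ _ _ (hwc.sub hvc) (hPc.sub hvc) hΦc (memL2_sub Φ _ _ hwc hvc hΦc hw hv.2) hdH.2
  have hiB : Integrable (fun x => (w x - P w x) * (starRingEnd ℂ) (P w x - v x)
      * ((Real.exp (-2 * Φ x) : ℝ) : ℂ)) :=
    wiInt Φ _ _ (hwc.sub hPc) (hPc.sub hvc) hΦc (memL2_sub Φ _ _ hwc hPc hΦc hw hPH.2) hdH.2
  have hdd : wInner Φ (fun x => P w x - v x) (fun x => P w x - v x) = 0 := by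
    have heq : wInner Φ (fun x => P w x - v x) (fun x => P w x - v x)
        = wInner Φ (fun x => w x - v x) (fun x => P w x - v x)
          - wInner Φ (fun x => w x - P w x) (fun x => P w x - v x) := by
      unfold wInner
      rw [← integral_sub hiA hiB]
      congr 1; funext x; ring
    rw [heq, h1, h2, sub_zero]
  have hreal : ∫ x, ‖P w x - v x‖^2 * Real.exp (-2 * Φ x) = 0 := by
    have hco : wInner Φ (fun x => P w x - v x) (fun x => P w x - v x)
        = ((∫ x, ‖P w x - v x‖^2 * Real.exp (-2 * Φ x) : ℝ) : ℂ) := by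
      unfold wInner
      have hre : (fun x => (P w x - v x) * (starRingEnd ℂ) (P w x - v x)
          * ((Real.exp (-2 * Φ x) : ℝ) : ℂ))
          = fun x => ((‖P w x - v x‖^2 * Real.exp (-2 * Φ x) : ℝ) : ℂ) := by
        funext x
        rw [Complex.mul_conj, ← Complex.ofReal_mul]
        congr 2
        rw [← Complex.sq_norm]
      show (∫ x, (P w x - v x) * (starRingEnd ℂ) (P w x - v x)
          * ((Real.exp (-2 * Φ x) : ℝ) : ℂ)) = _
      rw [hre]
      exact integral_ofReal
    rw [hdd] at hco
    exact_mod_cast hco.symm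
  have hnn : (0 : (Fin n → ℂ) → ℝ) ≤ fun x => ‖P w x - v x‖^2 * Real.exp (-2 * Φ x) :=
    fun x => mul_nonneg (sq_nonneg _) (Real.exp_pos _).le
  have hInt : Integrable (fun x => ‖P w x - v x‖^2 * Real.exp (-2 * Φ x)) := hdH.2
  have hae := (integral_eq_zero_iff_of_nonneg hnn hInt).1 hreal
  have hcont : Continuous (fun x => ‖P w x - v x‖^2 * Real.exp (-2 * Φ x)) :=
    ((hPc.sub hvc).norm.pow 2).mul (Real.continuous_exp.comp (continuous_const.mul hΦc))
  have hzero : (fun x => ‖P w x - v x‖^2 * Real.exp (-2 * Φ x))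
      = (0 : (Fin n → ℂ) → ℝ) :=
    (hcont.ae_eq_iff_eq volume continuous_const).mp hae
  intro x
  have hx : ‖P w x - v x‖^2 * Real.exp (-2 * Φ x) = 0 := congrFun hzero x
  have hex := Real.exp_pos (-2 * Φ x)
  have h5 : ‖P w x - v x‖^2 = 0 := (mul_eq_zero.mp hx).resolve_right hex.ne'
  exact sub_eq_zero.mp (norm_eq_zero.mp ((pow_eq_zero_iff (two_ne_zero)).mp h5))

/-- the reduction step of Section 2 of the paper.  With `Φ₀` strictly
plurisubharmonic, `Φ₀ = Φ₀ʰᵉʳᵐ + Re f`, `𝒰u = e^{-f}u`, and `q` an inhomogeneous quadratic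
polynomial: `Π_{Φ₀ʰᵉʳᵐ} ∘ e^q ∘ Π_{Φ₀ʰᵉʳᵐ} = 𝒰 ∘ Top(e^q) ∘ 𝒰⁻¹` as densely defined
operators, `𝒰` maps the maximal domain of `Top(e^q)` bijectively onto that of
`Π_{Φ₀ʰᵉʳᵐ} ∘ e^q ∘ Π_{Φ₀ʰᵉʳᵐ}`, and `Top(e^q)` is bounded on `H_{Φ₀}(ℂⁿ)` iff
`Π_{Φ₀ʰᵉʳᵐ} ∘ e^q ∘ Π_{Φ₀ʰᵉʳᵐ}` is bounded on `H_{Φ₀ʰᵉʳᵐ}(ℂⁿ)`. -/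
theorem statement14
    (Φ₀ : QuadraticForm ℝ (Fin n → ℂ))
    (hpsh : ∀ x : Fin n → ℂ, x ≠ 0 → 0 < herm (fun y => Φ₀ y) x)
    (f : QuadraticMap ℂ (Fin n → ℂ) ℂ)
    (hf : ∀ x, Φ₀ x = herm (fun y => Φ₀ y) x + (f x).re)
    (q₂ : QuadraticMap ℝ (Fin n → ℂ) ℂ) (q₁ : (Fin n → ℂ) →ₗ[ℝ] ℂ) (q₀ : ℂ)
    (q : (Fin n → ℂ) → ℂ) (hq : ∀ x, q x = q₂ x + q₁ x + q₀)
    (P₀ Ph : ((Fin n → ℂ) → ℂ) → ((Fin n → ℂ) → ℂ))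
    (hP₀ : IsBargmannProj (fun y => Φ₀ y) P₀)
    (hPh : IsBargmannProj (herm fun y => Φ₀ y) Ph) :
    -- `𝒰` maps the maximal domain of `Top(e^q)` bijectively onto that over `Φ₀ʰᵉʳᵐ`
    (∀ u : (Fin n → ℂ) → ℂ, MemDom (fun y => Φ₀ y) q u ↔
      MemDom (herm fun y => Φ₀ y) q (fun x => Complex.exp (-f x) * u x)) ∧
    -- `Π_{Φ₀ʰᵉʳᵐ} ∘ e^q ∘ Π_{Φ₀ʰᵉʳᵐ} = 𝒰 ∘ Top(e^q) ∘ 𝒰⁻¹` on that domain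
    (∀ u : (Fin n → ℂ) → ℂ, MemDom (fun y => Φ₀ y) q u → ∀ x,
      Ph (fun y => Complex.exp (q y) * (Complex.exp (-f y) * u y)) x
        = Complex.exp (-f x) * P₀ (fun y => Complex.exp (q y) * u y) x) ∧
    -- consequently the two Toeplitz operators are simultaneously bounded
    (ToeplitzBounded (fun y => Φ₀ y) q P₀ ↔
      ToeplitzBounded (herm fun y => Φ₀ y) q Ph) := by
  have hfd : Differentiable ℂ (fun x : Fin n → ℂ => f x) := quadDiff f
  have hΦc : Continuous (fun y : Fin n → ℂ => Φ₀ y) := (quadDiff Φ₀).continuous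
  have hermc : Continuous (herm fun y : Fin n → ℂ => Φ₀ y) := by
    unfold herm
    exact (hΦc.add (hΦc.comp (continuous_const_smul Complex.I))).div_const 2
  have hqc : Continuous q := by
    have h1 : Continuous fun x : Fin n → ℂ => q₂ x + q₁ x + q₀ :=
      ((quadDiff q₂).continuous.add q₁.continuous_of_finiteDimensional).add continuous_const
    have h2 : q = fun x => q₂ x + q₁ x + q₀ := funext hq
    rw [h2]; exact h1
  have h2all : ∀ x, Real.exp (-(f x).re) ^ 2 * Real.exp (-2 * herm (fun y => Φ₀ y) x)
      = Real.exp (-2 * Φ₀ x) := by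
    intro x
    rw [pow_two, ← Real.exp_add, ← Real.exp_add]
    congr 1
    rw [hf x]; ring
  have key1 : ∀ (u : (Fin n → ℂ) → ℂ) (x : Fin n → ℂ),
      ‖Complex.exp (-f x) * u x‖ ^ 2 * Real.exp (-2 * herm (fun y => Φ₀ y) x)
        = ‖u x‖ ^ 2 * Real.exp (-2 * Φ₀ x) := by
    intro u x
    have h1 : ‖Complex.exp (-f x)‖ = Real.exp (-(f x).re) := by
      rw [Complex.norm_exp, Complex.neg_re]
    rw [norm_mul, mul_pow, h1, mul_comm (Real.exp (-(f x).re) ^ 2) (‖u x‖ ^ 2),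
      mul_assoc, h2all]
  have keyI : ∀ (u v : (Fin n → ℂ) → ℂ) (x : Fin n → ℂ),
      (Complex.exp (-f x) * u x) * (starRingEnd ℂ) (Complex.exp (-f x) * v x)
          * ((Real.exp (-2 * herm (fun y => Φ₀ y) x) : ℝ) : ℂ)
        = u x * (starRingEnd ℂ) (v x) * ((Real.exp (-2 * Φ₀ x) : ℝ) : ℂ) := by
    intro u v x
    have hns : Complex.normSq (Complex.exp (-f x)) = Real.exp (-(f x).re) ^ 2 := by
      rw [Complex.normSq_eq_norm_sq, Complex.norm_exp, Complex.neg_re]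
    have hc : Complex.exp (-f x) * (starRingEnd ℂ) (Complex.exp (-f x))
        = ((Real.exp (-(f x).re) ^ 2 : ℝ) : ℂ) := by
      rw [Complex.mul_conj, hns]
    rw [map_mul]
    calc (Complex.exp (-f x) * u x) * ((starRingEnd ℂ) (Complex.exp (-f x)) * (starRingEnd ℂ) (v x))
          * ((Real.exp (-2 * herm (fun y => Φ₀ y) x) : ℝ) : ℂ)
        = (u x * (starRingEnd ℂ) (v x)) *
            ((Complex.exp (-f x) * (starRingEnd ℂ) (Complex.exp (-f x)))
              * ((Real.exp (-2 * herm (fun y => Φ₀ y) x) : ℝ) : ℂ)) := by ring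
      _ = u x * (starRingEnd ℂ) (v x) * ((Real.exp (-2 * Φ₀ x) : ℝ) : ℂ) := by
          rw [hc, ← Complex.ofReal_mul, h2all, mul_assoc]
  have memL2_eq : ∀ u : (Fin n → ℂ) → ℂ,
      MemL2 (herm fun y => Φ₀ y) (fun x => Complex.exp (-f x) * u x)
        = MemL2 (fun y => Φ₀ y) u := by
    intro u
    unfold MemL2
    congr 1
    funext x
    exact key1 u x
  have wns : ∀ u : (Fin n → ℂ) → ℂ,
      wNormSq (herm fun y => Φ₀ y) (fun x => Complex.exp (-f x) * u x)
        = wNormSq (fun y => Φ₀ y) u := by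
    intro u
    unfold wNormSq
    congr 1
    funext x
    exact key1 u x
  have wi : ∀ u v : (Fin n → ℂ) → ℂ,
      wInner (herm fun y => Φ₀ y) (fun x => Complex.exp (-f x) * u x)
          (fun x => Complex.exp (-f x) * v x)
        = wInner (fun y => Φ₀ y) u v := by
    intro u v
    unfold wInner
    congr 1
    funext x
    exact keyI u v x
  have hinv : ∀ (w : (Fin n → ℂ) → ℂ) (x : Fin n → ℂ),
      Complex.exp (-f x) * (Complex.exp (f x) * w x) = w x := by
    intro w x
    rw [← mul_assoc, ← Complex.exp_add, neg_add_cancel, Complex.exp_zero, one_mul]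
  have hinv2 : ∀ (w : (Fin n → ℂ) → ℂ) (x : Fin n → ℂ),
      Complex.exp (f x) * (Complex.exp (-f x) * w x) = w x := by
    intro w x
    rw [← mul_assoc, ← Complex.exp_add, add_neg_cancel, Complex.exp_zero, one_mul]
  have memH_iff : ∀ u : (Fin n → ℂ) → ℂ, MemH (fun y => Φ₀ y) u ↔
      MemH (herm fun y => Φ₀ y) (fun x => Complex.exp (-f x) * u x) := by
    intro u
    constructor
    · rintro ⟨hd, hl⟩
      exact ⟨hfd.neg.cexp.mul hd, by rw [memL2_eq u]; exact hl⟩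
    · rintro ⟨hd, hl⟩
      refine ⟨?_, by rw [← memL2_eq u]; exact hl⟩
      have hu : u = fun x => Complex.exp (f x) * (Complex.exp (-f x) * u x) := by
        funext x; rw [hinv2]
      rw [hu]
      exact hfd.cexp.mul hd
  have part1 : ∀ u : (Fin n → ℂ) → ℂ, MemDom (fun y => Φ₀ y) q u ↔
      MemDom (herm fun y => Φ₀ y) q (fun x => Complex.exp (-f x) * u x) := by
    intro u
    unfold MemDom
    have hcomm : (fun x => Complex.exp (q x) * (Complex.exp (-f x) * u x))
        = fun x => Complex.exp (-f x) * (Complex.exp (q x) * u x) := by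
      funext x; ring
    constructor
    · rintro ⟨h1, h2⟩
      refine ⟨(memH_iff u).1 h1, ?_⟩
      show MemL2 (herm fun y => Φ₀ y)
        (fun x => Complex.exp (q x) * (Complex.exp (-f x) * u x))
      rw [hcomm, memL2_eq]
      exact h2
    · rintro ⟨h1, h2⟩
      refine ⟨(memH_iff u).2 h1, ?_⟩
      have h2' : MemL2 (herm fun y => Φ₀ y)
          (fun x => Complex.exp (q x) * (Complex.exp (-f x) * u x)) := h2
      rw [hcomm, memL2_eq] at h2'
      exact h2'
  have part2 : ∀ u : (Fin n → ℂ) → ℂ, MemDom (fun y => Φ₀ y) q u → ∀ x,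
      Ph (fun y => Complex.exp (q y) * (Complex.exp (-f y) * u y)) x
        = Complex.exp (-f x) * P₀ (fun y => Complex.exp (q y) * u y) x := by
    intro u hu
    obtain ⟨⟨hud, _⟩, hgl2⟩ := hu
    have huc : Continuous u := hud.continuous
    have hmfc : Continuous fun x : Fin n → ℂ => Complex.exp (-f x) :=
      hfd.neg.cexp.continuous
    have hwc : Continuous fun y : Fin n → ℂ =>
        Complex.exp (q y) * (Complex.exp (-f y) * u y) :=
      (Complex.continuous_exp.comp hqc).mul (hmfc.mul huc)
    obtain ⟨hPH, hPorth⟩ := hP₀ _ hgl2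
    have hweq : (fun y => Complex.exp (q y) * (Complex.exp (-f y) * u y))
        = fun y => Complex.exp (-f y) * (Complex.exp (q y) * u y) := by
      funext y; ring
    have hwl2 : MemL2 (herm fun y => Φ₀ y)
        (fun y => Complex.exp (q y) * (Complex.exp (-f y) * u y)) := by
      rw [hweq, memL2_eq]
      exact hgl2
    have hvH : MemH (herm fun y => Φ₀ y)
        (fun x => Complex.exp (-f x) * P₀ (fun y => Complex.exp (q y) * u y) x) :=
      (memH_iff _).1 hPH
    apply proj_unique (herm fun y => Φ₀ y) hermc Ph hPh _ _ hwl2 hwc hvH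
    intro h hh
    have hh' : MemH (fun y => Φ₀ y) (fun x => Complex.exp (f x) * h x) := by
      apply (memH_iff _).mpr
      show MemH (herm fun y => Φ₀ y)
        (fun x => Complex.exp (-f x) * (Complex.exp (f x) * h x))
      have he : (fun x => Complex.exp (-f x) * (Complex.exp (f x) * h x)) = h :=
        funext (hinv h)
      rw [he]; exact hh
    have horth0 := hPorth _ hh'
    show wInner (herm fun y => Φ₀ y)
      (fun x => Complex.exp (q x) * (Complex.exp (-f x) * u x)
        - Complex.exp (-f x) * P₀ (fun y => Complex.exp (q y) * u y) x) h = 0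
    have heq2 : (fun x => Complex.exp (q x) * (Complex.exp (-f x) * u x)
        - Complex.exp (-f x) * P₀ (fun y => Complex.exp (q y) * u y) x)
        = fun x => Complex.exp (-f x)
            * (Complex.exp (q x) * u x - P₀ (fun y => Complex.exp (q y) * u y) x) := by
      funext x; ring
    have heq3 : h = fun x => Complex.exp (-f x) * (Complex.exp (f x) * h x) :=
      (funext (hinv h)).symm
    rw [heq2, heq3]
    exact (wi (fun x => Complex.exp (q x) * u x - P₀ (fun y => Complex.exp (q y) * u y) x)
      (fun x => Complex.exp (f x) * h x)).trans horth0
  refine ⟨part1, part2, ?_⟩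
  constructor
  · rintro ⟨C, hC0, hC⟩
    refine ⟨C, hC0, ?_⟩
    intro u' hu'
    have hUu : (fun x => Complex.exp (-f x) * (Complex.exp (f x) * u' x)) = u' :=
      funext (hinv u')
    have hdom : MemDom (fun y => Φ₀ y) q (fun x => Complex.exp (f x) * u' x) := by
      apply (part1 _).mpr
      show MemDom (herm fun y => Φ₀ y) q
        (fun x => Complex.exp (-f x) * (Complex.exp (f x) * u' x))
      rw [hUu]; exact hu'
    have hp2 := part2 _ hdom
    have hPheq : Ph (fun y => Complex.exp (q y) * u' y)
        = fun x => Complex.exp (-f x)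
            * P₀ (fun y => Complex.exp (q y) * (Complex.exp (f y) * u' y)) x := by
      have harg : (fun y => Complex.exp (q y) * (Complex.exp (-f y) * (Complex.exp (f y) * u' y)))
          = fun y => Complex.exp (q y) * u' y := by
        funext y; rw [hinv]
      rw [← harg]
      exact funext hp2
    have h1 : wNormSq (herm fun y => Φ₀ y) (Ph fun x => Complex.exp (q x) * u' x)
        = wNormSq (fun y => Φ₀ y)
            (P₀ fun y => Complex.exp (q y) * (Complex.exp (f y) * u' y)) := by
      rw [hPheq, wns]
    have h2 : wNormSq (herm fun y => Φ₀ y) u'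
        = wNormSq (fun y => Φ₀ y) (fun x => Complex.exp (f x) * u' x) := by
      have hw := wns (fun x => Complex.exp (f x) * u' x)
      rw [show (fun x => Complex.exp (-f x) * (fun x => Complex.exp (f x) * u' x) x)
        = u' from hUu] at hw
      exact hw
    rw [h1, h2]
    exact hC _ hdom
  · rintro ⟨C, hC0, hC⟩
    refine ⟨C, hC0, ?_⟩
    intro u hu
    have hu' := (part1 u).mp hu
    have hb := hC _ hu'
    have hp2 := part2 u hu
    have hPheq : Ph (fun y => Complex.exp (q y) * (Complex.exp (-f y) * u y))
        = fun x => Complex.exp (-f x) * P₀ (fun y => Complex.exp (q y) * u y) x :=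
      funext hp2
    have h1 : wNormSq (herm fun y => Φ₀ y)
        (Ph fun y => Complex.exp (q y) * (Complex.exp (-f y) * u y))
        = wNormSq (fun y => Φ₀ y) (P₀ fun y => Complex.exp (q y) * u y) := by
      rw [hPheq, wns]
    have h2 := wns u
    calc Real.sqrt (wNormSq (fun y => Φ₀ y) (P₀ fun x => Complex.exp (q x) * u x))
        = Real.sqrt (wNormSq (herm fun y => Φ₀ y)
            (Ph fun y => Complex.exp (q y) * (Complex.exp (-f y) * u y))) := by rw [h1]
      _ ≤ C * Real.sqrt (wNormSq (herm fun y => Φ₀ y)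
            (fun x => Complex.exp (-f x) * u x)) := hb
      _ = C * Real.sqrt (wNormSq (fun y => Φ₀ y) u) := by rw [wns u]


end BergerCoburn
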